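/- Let p₁ < p₂ < ... < p_k be distinct primes and let a₁, ..., a_k be positive integers. Then m = p₁^{a₁} p₂^{a₂} ⋯ p_k^{a_k} is a practical number if and only if p₁ = 2 and for every j with 1 < j ≤ k one has p_j − 1 ≤ σ(p₁^{a₁} p₂^{a₂} ⋯ p_{j−1}^{a_{j−1}}), where σ(n) denotes the sum of the positive divisors of n. -/

import Mathlib

/-- A positive integer `m` is practical if every `n` with `1 ≤ n ≤ m` is a sum of
distinct positive divisors of `m`. -/
def Practical (m : ℕ) : Prop :=
  0 < m ∧ ∀ n : ℕ, 1 ≤ n → n ≤ m → ∃ s : Finset ℕ, s ⊆ m.divisors ∧ ∑ d ∈ s, d = n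

/-- Sum of divisors. -/
def SumDiv (m : ℕ) : ℕ := ∑ d ∈ m.divisors, d

lemma SumDiv_one : SumDiv 1 = 1 := by simp [SumDiv]

lemma SumDiv_prime_pow {p : ℕ} (hp : p.Prime) (i : ℕ) :
    SumDiv (p ^ i) = ∑ k ∈ Finset.range (i + 1), p ^ k := by
  rw [SumDiv, ← ArithmeticFunction.sigma_one_apply, ArithmeticFunction.sigma_one_apply_prime_pow hp]

lemma SumDiv_prime_pow_succ {p : ℕ} (hp : p.Prime) (i : ℕ) :
    SumDiv (p ^ (i + 1)) = SumDiv (p ^ i) + p ^ (i + 1) := by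
  rw [SumDiv_prime_pow hp, SumDiv_prime_pow hp, Finset.sum_range_succ]

lemma SumDiv_geom {p : ℕ} (hp : p.Prime) (i : ℕ) :
    (p - 1) * SumDiv (p ^ i) + 1 = p ^ (i + 1) := by
  have h2 := hp.two_le
  induction i with
  | zero =>
    simp only [pow_zero, SumDiv_one, mul_one, zero_add, pow_one]
    omega
  | succ i ih =>
    rw [SumDiv_prime_pow_succ hp, Nat.mul_add]
    have key : (p - 1) * p ^ (i + 1) + p ^ (i + 1) = p ^ (i + 1 + 1) := by
      have h1 : (p - 1) + 1 = p := by omega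
      calc (p - 1) * p ^ (i + 1) + p ^ (i + 1) = ((p - 1) + 1) * p ^ (i + 1) := by ring
        _ = p ^ (i + 1 + 1) := by rw [h1]; ring
    omega

/-- Strong practicality: every `n ≤ σ(m)` is a sum of distinct divisors. -/
def SPractical (m : ℕ) : Prop :=
  0 < m ∧ ∀ n : ℕ, n ≤ SumDiv m → ∃ s : Finset ℕ, s ⊆ m.divisors ∧ ∑ d ∈ s, d = n

lemma SPractical_one : SPractical 1 := by
  refine ⟨one_pos, fun n hn => ?_⟩
  rw [SumDiv_one] at hn
  interval_cases n
  · exact ⟨∅, by simp⟩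
  · exact ⟨{1}, by simp⟩

lemma SPractical.practical {m : ℕ} (h : SPractical m) : Practical m := by
  refine ⟨h.1, fun n _ hn => h.2 n (hn.trans ?_)⟩
  exact Finset.single_le_sum (fun i _ => Nat.zero_le i) (Nat.mem_divisors_self m h.1.ne')

lemma SPractical.mul_prime_pow {m p : ℕ} (hm : SPractical m) (hp : p.Prime)
    (hpm : ¬ p ∣ m) (hps : p - 1 ≤ SumDiv m) (a : ℕ) : SPractical (m * p ^ a) := by
  have hm0 : 0 < m := hm.1
  have hp0 : 0 < p := hp.pos
  have hcop : ∀ b : ℕ, Nat.Coprime m (p ^ b) := fun b =>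
    (((Nat.Prime.coprime_iff_not_dvd hp).mpr hpm).symm).pow_right b
  have hS : ∀ b : ℕ, SumDiv (m * p ^ b) = SumDiv m * SumDiv (p ^ b) := fun b =>
    Nat.Coprime.sum_divisors_mul (hcop b)
  suffices H : ∀ b n : ℕ, n ≤ SumDiv m * SumDiv (p ^ b) →
      ∃ s : Finset ℕ, s ⊆ (m * p ^ b).divisors ∧ ∑ d ∈ s, d = n by
    refine ⟨by positivity, fun n hn => ?_⟩
    rw [hS] at hn
    exact H a n hn
  intro b
  induction b with
  | zero =>
    intro n hn
    rw [pow_zero, SumDiv_one, mul_one] at hn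
    simpa using hm.2 n hn
  | succ b ih =>
    intro n hn
    set P := p ^ (b + 1) with hPdef
    have hP0 : 0 < P := pow_pos hp0 _
    have hSP : SumDiv P = SumDiv (p ^ b) + P := SumDiv_prime_pow_succ hp b
    obtain ⟨c, hcS, hcP, hr⟩ :
        ∃ c, c ≤ SumDiv m ∧ c * P ≤ n ∧ n - c * P ≤ SumDiv m * SumDiv (p ^ b) := by
      rcases le_or_gt (SumDiv m * P) n with h | h
      · refine ⟨SumDiv m, le_rfl, h, ?_⟩
        have hmul : SumDiv m * SumDiv P = SumDiv m * SumDiv (p ^ b) + SumDiv m * P := by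
          rw [hSP, Nat.mul_add]
        omega
      · refine ⟨n / P, ((Nat.div_lt_iff_lt_mul hP0).mpr h).le, Nat.div_mul_le_self n P, ?_⟩
        have hdm : n / P * P + n % P = n := by rw [mul_comm]; exact Nat.div_add_mod n P
        have hlt := Nat.mod_lt n hP0
        have h2 : (p - 1) * SumDiv (p ^ b) + 1 = P := SumDiv_geom hp b
        have h3 : (p - 1) * SumDiv (p ^ b) ≤ SumDiv m * SumDiv (p ^ b) :=
          Nat.mul_le_mul_right _ hps
        omega
    obtain ⟨t, htsub, htsum⟩ := hm.2 c hcS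
    obtain ⟨s', hssub, hssum⟩ := ih (n - c * P) hr
    refine ⟨s' ∪ t.image (· * P), ?_, ?_⟩
    · intro x hx
      rcases Finset.mem_union.mp hx with hx | hx
      · have hx' := hssub hx
        rw [Nat.mem_divisors] at hx' ⊢
        exact ⟨hx'.1.trans (mul_dvd_mul_left m (pow_dvd_pow p (Nat.le_succ b))), by positivity⟩
      · obtain ⟨d, hd, rfl⟩ := Finset.mem_image.mp hx
        have hd' := htsub hd
        rw [Nat.mem_divisors] at hd' ⊢
        exact ⟨mul_dvd_mul hd'.1 dvd_rfl, by positivity⟩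
    · have hdisj : Disjoint s' (t.image (· * P)) := by
        rw [Finset.disjoint_right]
        rintro x hx hxs
        obtain ⟨d, hd, rfl⟩ := Finset.mem_image.mp hx
        have h1 : d * P ∣ m * p ^ b := (Nat.mem_divisors.mp (hssub hxs)).1
        have h2 : P ∣ m * p ^ b := dvd_trans (dvd_mul_left P d) h1
        have h3 : p ^ b * p ∣ p ^ b * m := by
          rw [← pow_succ]
          rwa [mul_comm m (p ^ b)] at h2
        exact hpm ((Nat.mul_dvd_mul_iff_left (pow_pos hp0 b)).mp h3)
      rw [Finset.sum_union hdisj, hssum,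
        Finset.sum_image (fun x _ y _ h => Nat.eq_of_mul_eq_mul_right hP0 h)]
      rw [← Finset.sum_mul, htsum]
      omega

/-- Stewart's structure theorem for practical numbers. -/
theorem stewart_structure_theorem (k : ℕ) (hk : 0 < k)
    (p : Fin k → ℕ) (a : Fin k → ℕ)
    (hp : ∀ i, (p i).Prime) (hmono : StrictMono p) (ha : ∀ i, 0 < a i)
    (m : ℕ) (hm : m = ∏ i, p i ^ a i) :
    Practical m ↔
      p ⟨0, hk⟩ = 2 ∧
      ∀ j : Fin k, 0 < (j : ℕ) →
        p j - 1 ≤ ∑ d ∈ Nat.divisors (∏ i ∈ Finset.univ.filter (fun i => i < j), p i ^ a i), d := by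
  have hm0 : 0 < m := by
    rw [hm]; exact Finset.prod_pos fun i _ => pow_pos (hp i).pos _
  constructor
  · intro hpr
    constructor
    · -- p₀ = 2
      by_contra h0
      have hodd : ¬ 2 ∣ m := by
        rw [hm]
        intro h2
        obtain ⟨i, -, hi⟩ := (Nat.prime_two.prime.dvd_finset_prod_iff _).mp h2
        have hd2 : 2 ∣ p i := Nat.Prime.dvd_of_dvd_pow Nat.prime_two hi
        have hpi2 : p i = 2 := ((Nat.prime_dvd_prime_iff_eq Nat.prime_two (hp i)).mp hd2).symm
        have hle : p ⟨0, hk⟩ ≤ p i := hmono.monotone (by simp [Fin.le_def])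
        have := (hp ⟨0, hk⟩).two_le
        omega
      have h2m : 2 ≤ m := by
        have hdvd : p ⟨0, hk⟩ ∣ m := by
          rw [hm]
          exact dvd_trans (dvd_pow_self _ (ha ⟨0, hk⟩).ne')
            (Finset.dvd_prod_of_mem _ (Finset.mem_univ _))
        have := (hp ⟨0, hk⟩).two_le
        have := Nat.le_of_dvd hm0 hdvd
        omega
      obtain ⟨s, hsub, hsum⟩ := hpr.2 2 one_le_two h2m
      have hone : ∀ d ∈ s, d = 1 := by
        intro d hd
        have hdvd := (Nat.mem_divisors.mp (hsub hd)).1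
        have hdodd : ¬ 2 ∣ d := fun h => hodd (h.trans hdvd)
        have hdle : d ≤ ∑ x ∈ s, x := Finset.single_le_sum (fun i _ => Nat.zero_le i) hd
        rw [hsum] at hdle
        have hd0 : d ≠ 0 := by rintro rfl; exact hdodd (dvd_zero 2)
        omega
      have hsub1 : s ⊆ {1} := fun d hd => Finset.mem_singleton.mpr (hone d hd)
      have hle1 : (∑ d ∈ s, d) ≤ ∑ d ∈ ({1} : Finset ℕ), d :=
        Finset.sum_le_sum_of_subset hsub1
      rw [hsum, Finset.sum_singleton] at hle1
      omega
    · -- the σ condition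
      intro j hj
      by_contra hcon
      push_neg at hcon
      set M := ∏ i ∈ Finset.univ.filter (fun i => i < j), p i ^ a i with hMdef
      have hcon' : SumDiv M < p j - 1 := hcon
      have hpj2 := (hp j).two_le
      have hM0 : 0 < M := Finset.prod_pos fun i _ => pow_pos (hp i).pos _
      set R := ∏ i ∈ Finset.univ.filter (fun i => ¬ i < j), p i ^ a i with hRdef
      have hMR : M * R = m := by
        rw [hm]; exact Finset.prod_filter_mul_prod_filter_not _ _ _
      have hpjm : p j ≤ m := by
        refine Nat.le_of_dvd hm0 ?_
        rw [hm]
        exact dvd_trans (dvd_pow_self _ (ha j).ne') (Finset.dvd_prod_of_mem _ (Finset.mem_univ _))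
      obtain ⟨s, hsub, hsum⟩ := hpr.2 (SumDiv M + 1) (by omega) (by omega)
      have hsubM : s ⊆ M.divisors := by
        intro d hd
        have hdm := Nat.mem_divisors.mp (hsub hd)
        have hd0 : 0 < d := Nat.pos_of_mem_divisors (hsub hd)
        have hdle : d ≤ ∑ x ∈ s, x := Finset.single_le_sum (fun i _ => Nat.zero_le i) hd
        rw [hsum] at hdle
        have hdlt : d < p j := by omega
        have hcopdR : Nat.Coprime d R := by
          by_contra hg
          obtain ⟨q, hq, hqd⟩ := Nat.exists_prime_and_dvd hg
          have hqd' : q ∣ d := hqd.trans (Nat.gcd_dvd_left _ _)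
          have hqR : q ∣ R := hqd.trans (Nat.gcd_dvd_right _ _)
          obtain ⟨i, hi, hqi⟩ := (hq.prime.dvd_finset_prod_iff _).mp hqR
          have hqpi : q = p i := (Nat.prime_dvd_prime_iff_eq hq (hp i)).mp (hq.dvd_of_dvd_pow hqi)
          have hij : ¬ i < j := by
            have := (Finset.mem_filter.mp hi).2
            simpa using this
          have hji : p j ≤ p i := hmono.monotone (not_lt.mp hij)
          have hqle : q ≤ d := Nat.le_of_dvd hd0 hqd'
          omega
        exact Nat.mem_divisors.mpr
          ⟨Nat.Coprime.dvd_of_dvd_mul_right hcopdR (hMR ▸ hdm.1), hM0.ne'⟩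
      have hfin : (∑ d ∈ s, d) ≤ ∑ d ∈ M.divisors, d :=
        Finset.sum_le_sum_of_subset hsubM
      rw [hsum] at hfin
      have hSM : SumDiv M = ∑ d ∈ M.divisors, d := rfl
      omega
  · rintro ⟨h2, hcond⟩
    have key : ∀ j ≤ k,
        SPractical (∏ i ∈ Finset.univ.filter (fun i : Fin k => (i : ℕ) < j), p i ^ a i) := by
      intro j
      induction j with
      | zero =>
        intro _
        have h1 : (∏ i ∈ Finset.univ.filter (fun i : Fin k => (i : ℕ) < 0), p i ^ a i) = 1 := by
          simp
        rw [h1]; exact SPractical_one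
      | succ j ih =>
        intro hjk
        have hj : j < k := hjk
        set jj : Fin k := ⟨j, hj⟩ with hjjdef
        have hsplit : Finset.univ.filter (fun i : Fin k => (i : ℕ) < j + 1)
            = insert jj (Finset.univ.filter (fun i : Fin k => (i : ℕ) < j)) := by
          ext i
          simp only [Finset.mem_filter, Finset.mem_insert, Finset.mem_univ, true_and, Fin.ext_iff, hjjdef, Fin.val_mk]
          constructor
          · intro h; omega
          · rintro (h | h) <;> omega
        have hnotmem : jj ∉ Finset.univ.filter (fun i : Fin k => (i : ℕ) < j) := by
          simp [hjjdef]
        rw [hsplit, Finset.prod_insert hnotmem, mul_comm]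
        have ihj := ih (le_of_lt hj)
        refine ihj.mul_prime_pow (hp jj) ?_ ?_ (a jj)
        · intro hdvd
          obtain ⟨i, hi, hqi⟩ := ((hp jj).prime.dvd_finset_prod_iff _).mp hdvd
          have heq : p jj = p i :=
            (Nat.prime_dvd_prime_iff_eq (hp jj) (hp i)).mp ((hp jj).dvd_of_dvd_pow hqi)
          have hji : jj = i := hmono.injective heq
          have hij : (i : ℕ) < j := (Finset.mem_filter.mp hi).2
          rw [← hji] at hij
          simp [hjjdef] at hij
        · rcases Nat.eq_zero_or_pos j with rfl | hj0
          · have hp2 : p jj = 2 := h2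
            rw [hp2]
            have h1 : (∏ i ∈ Finset.univ.filter (fun i : Fin k => (i : ℕ) < 0), p i ^ a i) = 1 := by
              simp
            rw [h1, SumDiv_one]
          · have hc := hcond jj (by simp [hjjdef]; omega)
            have hfe : Finset.univ.filter (fun i : Fin k => i < jj)
                = Finset.univ.filter (fun i : Fin k => (i : ℕ) < j) := by
              ext i
              simp [Fin.lt_def, hjjdef]
            rw [hfe] at hc
            exact hc
    have hfinal := key k le_rfl
    have hfin : Finset.univ.filter (fun i : Fin k => (i : ℕ) < k) = Finset.univ := by
      ext i; simp [i.isLt]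
    rw [hfin] at hfinal
    rw [hm]
    exact hfinal.practical
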